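/- The unique positive distinguished subexpression for v ≤ w inside a reduced word s_{i_1}...s_{i_n} for w can be constructed greedily from the right: with v_{(n)} = v, set t_j = s_{i_j} if v_{(j)} s_{i_j} < v_{(j)} in Bruhat order, and t_j = 1 otherwise, where v_{(j-1)} = v_{(j)} t_j^{-1}. -/

import Mathlib

open List

namespace CoxAux

attribute [local instance] Classical.propDecidable

section GroupLemmas

variable {G : Type*} [Group G] {x y a : G}

theorem inv_eq_self (hx : x * x = 1) : x⁻¹ = x := inv_eq_of_mul_eq_one_left hx

theorem conj_cancel (hy : y * y = 1) (z : G) : y * (y * z * y) * y = z := by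
  calc y * (y * z * y) * y = (y * y) * z * (y * y) := by group
    _ = z := by rw [hy, one_mul, mul_one]

theorem ycomm (hx : x * x = 1) (hy : y * y = 1) (ha : a = x * y) (k : ℕ) :
    y * a ^ k = (a⁻¹) ^ k * y := by
  induction k with
  | zero => simp
  | succ k ih =>
    have hbase : y * a = a⁻¹ * y := by
      rw [ha, mul_inv_rev, inv_eq_self hx, inv_eq_self hy, ← mul_assoc]
    calc y * a ^ (k + 1) = (y * a ^ k) * a := by rw [pow_succ, mul_assoc]
      _ = (a⁻¹) ^ k * (y * a) := by rw [ih, mul_assoc]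
      _ = (a⁻¹) ^ (k + 1) * y := by rw [hbase, pow_succ, mul_assoc]

theorem ycomm' (hx : x * x = 1) (hy : y * y = 1) (ha : a = x * y) (k : ℕ) :
    y * (a⁻¹) ^ k = a ^ k * y := by
  induction k with
  | zero => simp
  | succ k ih =>
    have hbase : y * a⁻¹ = a * y := by
      rw [ha, mul_inv_rev, inv_eq_self hx, inv_eq_self hy]
      calc y * (y * x) = (y * y) * x := by group
        _ = x * (y * y) := by rw [hy, one_mul, mul_one]
        _ = x * y * y := by group
    calc y * (a⁻¹) ^ (k + 1) = (y * (a⁻¹) ^ k) * a⁻¹ := by rw [pow_succ, mul_assoc]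
      _ = a ^ k * (y * a⁻¹) := by rw [ih, mul_assoc]
      _ = a ^ (k + 1) * y := by rw [hbase, pow_succ, mul_assoc]

end GroupLemmas

variable {B W : Type*} [Group W] {M : CoxeterMatrix B} (cs : CoxeterSystem M W)

local prefix:100 "σ" => cs.simple
local prefix:100 "π" => cs.wordProd
local prefix:100 "ℓ" => cs.length

/-- The underlying function of the permutation attached to a simple reflection. -/
noncomputable def F (i : B) : W × ℤˣ → W × ℤˣ :=
  fun p => (σ i * p.1 * σ i, if p.1 = σ i then -p.2 else p.2)

theorem F_involutive (i : B) : Function.Involutive (F cs i) := by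
  rintro ⟨w, ε⟩
  unfold F
  simp only
  have h1 : σ i * (σ i * w * σ i) * σ i = w := by
    rw [← mul_assoc, ← mul_assoc, cs.simple_mul_simple_self, one_mul, mul_assoc,
      cs.simple_mul_simple_self, mul_one]
  have h2 : (σ i * w * σ i = σ i) ↔ (w = σ i) := by
    constructor
    · intro h
      have := congrArg (fun z => σ i * z * σ i) h
      rw [h1] at this
      rw [this, cs.simple_mul_simple_self, one_mul]
    · rintro h
      rw [h, cs.simple_mul_simple_self, one_mul]
  simp only [h1, h2]
  by_cases hp : w = σ i <;> simp [hp]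

/-- The permutation of `W × ℤˣ` attached to a simple reflection. -/
noncomputable def E (i : B) : Equiv.Perm (W × ℤˣ) := (F_involutive cs i).toPerm

theorem E_apply (i : B) (p : W × ℤˣ) :
    E cs i p = (σ i * p.1 * σ i, if p.1 = σ i then -p.2 else p.2) := rfl

theorem E_liftable : CoxeterMatrix.IsLiftable M (E cs) := by
  intro i i'
  have hx : σ i * σ i = 1 := cs.simple_mul_simple_self i
  have hy : σ i' * σ i' = 1 := cs.simple_mul_simple_self i'
  set m := M i i' with hm
  have hapow : (σ i * σ i') ^ m = 1 := cs.simple_mul_simple_pow i i'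
  set a : W := σ i * σ i' with ha
  set ν : W → ℕ → ℤˣ := fun w j => if w = (a⁻¹) ^ j * σ i' then -1 else 1 with hν
  have hgen : ∀ (k : ℕ) (z w : W), (a ^ k * w * (a⁻¹) ^ k = z) ↔
      (w = (a⁻¹) ^ k * z * a ^ k) := by
    intro k z w
    rw [inv_pow]
    constructor
    · intro h; rw [← h]; group
    · intro h; rw [h]; group
  have hc1 : ∀ (k : ℕ) (w : W), (a ^ k * w * (a⁻¹) ^ k = σ i') ↔
      (w = (a⁻¹) ^ (2 * k) * σ i') := by
    intro k w
    rw [hgen k (σ i') w, mul_assoc, ycomm hx hy ha k, ← mul_assoc, ← pow_add, ← two_mul]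
  have hc2 : ∀ (k : ℕ) (w : W), (σ i' * (a ^ k * w * (a⁻¹) ^ k) * σ i' = σ i) ↔
      (w = (a⁻¹) ^ (2 * k + 1) * σ i') := by
    intro k w
    have hinv : a⁻¹ = σ i' * σ i := by
      rw [ha, mul_inv_rev, inv_eq_self hx, inv_eq_self hy]
    have step : (σ i' * (a ^ k * w * (a⁻¹) ^ k) * σ i' = σ i) ↔
        (a ^ k * w * (a⁻¹) ^ k = a⁻¹ * σ i') := by
      have h2 : a⁻¹ * σ i' = σ i' * σ i * σ i' := by rw [hinv]
      constructor
      · intro h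
        have e : a ^ k * w * (a⁻¹) ^ k = σ i' * σ i * σ i' := by
          rw [← h]
          exact (conj_cancel hy _).symm
        exact e.trans h2.symm
      · intro h
        rw [h, h2]
        exact conj_cancel hy (σ i)
    rw [step, hgen k (a⁻¹ * σ i') w, mul_assoc, mul_assoc, ycomm hx hy ha k]
    have hcollect : (a⁻¹) ^ k * (a⁻¹ * ((a⁻¹) ^ k * σ i')) = (a⁻¹) ^ (2 * k + 1) * σ i' := by
      rw [show 2 * k + 1 = k + 1 + k by ring, pow_add, pow_succ]
      group
    rw [hcollect]
  have key : ∀ (k : ℕ) (w : W) (ε : ℤˣ), ((E cs i * E cs i') ^ k) (w, ε) =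
      (a ^ k * w * (a⁻¹) ^ k, ε * ∏ j ∈ Finset.range (2 * k), ν w j) := by
    intro k
    induction k with
    | zero => intro w ε; simp
    | succ k ih =>
      intro w ε
      rw [pow_succ', Equiv.Perm.mul_apply, ih, Equiv.Perm.mul_apply, E_apply, E_apply]
      simp only [Prod.mk.injEq]
      refine ⟨?_, ?_⟩
      · show σ i * (σ i' * (a ^ k * w * (a⁻¹) ^ k) * σ i') * σ i
            = a ^ (k + 1) * w * (a⁻¹) ^ (k + 1)
        rw [pow_succ' a, pow_succ (a⁻¹), ha, mul_inv_rev, inv_eq_self hx, inv_eq_self hy]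
        simp [mul_assoc]
      · show (if σ i' * (a ^ k * w * (a⁻¹) ^ k) * σ i' = σ i then
            -(if a ^ k * w * (a⁻¹) ^ k = σ i' then -(ε * ∏ j ∈ Finset.range (2 * k), ν w j)
              else ε * ∏ j ∈ Finset.range (2 * k), ν w j)
          else (if a ^ k * w * (a⁻¹) ^ k = σ i' then -(ε * ∏ j ∈ Finset.range (2 * k), ν w j)
              else ε * ∏ j ∈ Finset.range (2 * k), ν w j))
          = ε * ∏ j ∈ Finset.range (2 * (k + 1)), ν w j
        have hrange : 2 * (k + 1) = 2 * k + 1 + 1 := by ring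
        rw [hrange, Finset.prod_range_succ, Finset.prod_range_succ]
        rw [hc1 k w, hc2 k w]
        have hν1 : ν w (2 * k) = if w = (a⁻¹) ^ (2 * k) * σ i' then -1 else 1 := rfl
        have hν2 : ν w (2 * k + 1) = if w = (a⁻¹) ^ (2 * k + 1) * σ i' then -1 else 1 := rfl
        rw [hν1, hν2]
        by_cases h1 : w = (a⁻¹) ^ (2 * k) * σ i' <;>
          by_cases h2 : w = (a⁻¹) ^ (2 * k + 1) * σ i' <;>
          simp [h1, h2] <;> ring
  apply Equiv.ext
  rintro ⟨w, ε⟩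
  have ha2 : (a⁻¹) ^ m = 1 := by rw [inv_pow, hapow, inv_one]
  have hQ : ∏ j ∈ Finset.range (2 * m), ν w j = 1 := by
    rw [two_mul, Finset.prod_range_add]
    have hshift : ∀ j, ν w (m + j) = ν w j := by
      intro j
      have : (a⁻¹) ^ (m + j) = (a⁻¹) ^ j := by
        rw [pow_add, inv_pow, hapow, inv_one, one_mul]
      simp only [hν, this]
    simp only [hshift]
    exact Int.units_mul_self _
  rw [Equiv.Perm.one_apply, key m w ε, hapow, ha2, hQ]
  simp

/-- The sign homomorphism into permutations of `W × ℤˣ`. -/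
noncomputable def Phi : W →* Equiv.Perm (W × ℤˣ) := cs.lift ⟨E cs, E_liftable cs⟩

theorem Phi_simple (i : B) : Phi cs (σ i) = E cs i := cs.lift_apply_simple (E_liftable cs) i

theorem conj_eq_iff (u z w : W) : u * w * u⁻¹ = z ↔ w = u⁻¹ * z * u := by
  constructor
  · intro h; rw [← h]; group
  · intro h; rw [h]; group

theorem Phi_wordProd (ω : List B) (w : W) (ε : ℤˣ) :
    Phi cs (π ω) (w, ε) = (π ω * w * (π ω)⁻¹,
      (-1 : ℤˣ) ^ (List.count w (cs.rightInvSeq ω)) * ε) := by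
  induction ω generalizing w ε with
  | nil => simp
  | cons i ω ih =>
    rw [cs.wordProd_cons, map_mul, Equiv.Perm.mul_apply, ih, Phi_simple, E_apply]
    simp only [Prod.mk.injEq]
    constructor
    · show σ i * (π ω * w * (π ω)⁻¹) * σ i = σ i * π ω * w * (σ i * π ω)⁻¹
      rw [mul_inv_rev, cs.inv_simple]
      group
    · show (if π ω * w * (π ω)⁻¹ = σ i then
          -((-1 : ℤˣ) ^ (List.count w (cs.rightInvSeq ω)) * ε)
        else (-1 : ℤˣ) ^ (List.count w (cs.rightInvSeq ω)) * ε)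
        = (-1 : ℤˣ) ^ (List.count w (cs.rightInvSeq (i :: ω))) * ε
      have hris : cs.rightInvSeq (i :: ω) = ((π ω)⁻¹ * σ i * π ω) :: cs.rightInvSeq ω := rfl
      rw [hris, List.count_cons, conj_eq_iff (π ω) (σ i) w]
      by_cases hw : w = (π ω)⁻¹ * σ i * π ω
      · simp only [hw, if_pos rfl, beq_self_eq_true, if_true, pow_succ]
        rw [mul_neg_one, neg_mul]
      · have hne : ¬((π ω)⁻¹ * σ i * π ω = w) := fun h => hw h.symm
        simp [if_neg hw, hne]

/-- The sign of `t` relative to `w`. -/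
noncomputable def sgn (w t : W) : ℤˣ := (Phi cs w (t, 1)).2

theorem sgn_wordProd (ω : List B) (t : W) :
    sgn cs (π ω) t = (-1 : ℤˣ) ^ (List.count t (cs.rightInvSeq ω)) := by
  rw [sgn, Phi_wordProd, mul_one]

theorem Phi_apply (x w : W) (ε : ℤˣ) :
    Phi cs x (w, ε) = (x * w * x⁻¹, sgn cs x w * ε) := by
  obtain ⟨ω, rfl⟩ := cs.wordProd_surjective x
  rw [Phi_wordProd, sgn_wordProd]

theorem sgn_mul (x y w : W) :
    sgn cs (x * y) w = sgn cs x (y * w * y⁻¹) * sgn cs y w := by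
  have : Phi cs (x * y) (w, 1) = Phi cs x (Phi cs y (w, 1)) := by
    rw [map_mul, Equiv.Perm.mul_apply]
  rw [sgn, this, Phi_apply cs y w 1, Phi_apply cs x (y * w * y⁻¹) (sgn cs y w * 1)]
  simp [sgn]

theorem sgn_simple (i : B) (w : W) : sgn cs (σ i) w = if w = σ i then -1 else 1 := by
  rw [sgn, Phi_simple, E_apply]

theorem sgn_one (w : W) : sgn cs 1 w = 1 := by
  rw [sgn, map_one]
  rfl

theorem sgn_reflection {t : W} (ht : cs.IsReflection t) : sgn cs t t = -1 := by
  obtain ⟨u, i, rfl⟩ := ht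
  set t := u * σ i * u⁻¹ with htdef
  have e1 : u⁻¹ * t * (u⁻¹)⁻¹ = σ i := by rw [htdef]; group
  have e2 : σ i * σ i * (σ i)⁻¹ = σ i := by group
  have s1 : sgn cs t t = sgn cs (u * σ i) (σ i) * sgn cs u⁻¹ t := by
    have : t = (u * σ i) * u⁻¹ := by rw [htdef]
    nth_rewrite 1 [this]
    rw [sgn_mul cs (u * σ i) u⁻¹ t, e1]
  have s2 : sgn cs (u * σ i) (σ i) = sgn cs u (σ i) * (-1) := by
    rw [sgn_mul cs u (σ i) (σ i), e2, sgn_simple, if_pos rfl]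
  have s3 : sgn cs u (σ i) * sgn cs u⁻¹ t = 1 := by
    have : sgn cs (u * u⁻¹) t = 1 := by rw [mul_inv_cancel, sgn_one]
    rw [sgn_mul cs u u⁻¹ t, e1] at this
    exact this
  rw [s1, s2]
  calc sgn cs u (σ i) * (-1) * sgn cs u⁻¹ t
      = (sgn cs u (σ i) * sgn cs u⁻¹ t) * (-1) := mul_right_comm _ _ _
    _ = -1 := by rw [s3, one_mul]

theorem lt_of_sgn_neg {ω : List B} (hred : cs.IsReduced ω) {t : W}
    (h : sgn cs (π ω) t = -1) : ℓ (π ω * t) < ℓ (π ω) := by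
  rw [sgn_wordProd] at h
  have hodd : Odd (List.count t (cs.rightInvSeq ω)) := by
    rcases Nat.even_or_odd (List.count t (cs.rightInvSeq ω)) with he | ho
    · rw [he.neg_one_pow] at h
      exact absurd h (by decide)
    · exact ho
  have hmem : t ∈ cs.rightInvSeq ω := by
    rcases Nat.eq_zero_or_pos (List.count t (cs.rightInvSeq ω)) with h0 | hp
    · rw [h0] at hodd; exact absurd hodd (by decide)
    · exact List.count_pos_iff.mp hp
  exact (cs.isRightInversion_of_mem_rightInvSeq hred hmem).2

theorem sgn_neg_of_lt {w t : W} (ht : cs.IsReflection t)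
    (hlt : ℓ (w * t) < ℓ w) : sgn cs w t = -1 := by
  rcases Int.units_eq_one_or (sgn cs w t) with h1 | h1
  · exfalso
    have htt : t * t * t⁻¹ = t := by rw [ht.mul_self, one_mul, ht.inv]
    have : sgn cs (w * t) t = -1 := by
      rw [sgn_mul cs w t t, htt, h1, sgn_reflection cs ht, one_mul]
    obtain ⟨ωt, hωt, hπ⟩ := cs.exists_reduced_word' (w * t)
    rw [hπ] at this
    have := lt_of_sgn_neg cs hωt this
    rw [← hπ, mul_assoc, ht.mul_self, mul_one] at this
    omega
  · exact h1

/-- Strong exchange property. -/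
theorem strong_exchange (ω : List B) {t : W} (ht : cs.IsReflection t)
    (hlt : ℓ (π ω * t) < ℓ (π ω)) :
    ∃ j, ∃ _ : j < ω.length, π (ω.eraseIdx j) = π ω * t := by
  have hsgn : sgn cs (π ω) t = -1 := sgn_neg_of_lt cs ht hlt
  rw [sgn_wordProd] at hsgn
  have hmem : t ∈ cs.rightInvSeq ω := by
    rcases Nat.eq_zero_or_pos (List.count t (cs.rightInvSeq ω)) with h0 | hp
    · rw [h0, pow_zero] at hsgn
      exact absurd hsgn (by decide)
    · exact List.count_pos_iff.mp hp
  obtain ⟨j, hj, hjt⟩ := List.mem_iff_getElem.mp hmem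
  rw [cs.length_rightInvSeq] at hj
  refine ⟨j, hj, ?_⟩
  rw [← cs.wordProd_mul_getD_rightInvSeq ω j]
  congr 1
  rw [List.getD_eq_getElem _ 1 (by rw [cs.length_rightInvSeq]; exact hj)]
  exact hjt

theorem sublist_concat_cases {α : Type*} {τ σw : List α} {a : α} (h : τ.Sublist (σw ++ [a])) :
    τ.Sublist σw ∨ ∃ τ', τ = τ' ++ [a] ∧ τ'.Sublist σw := by
  rw [List.sublist_append_iff] at h
  obtain ⟨l₁, l₂, rfl, h₁, h₂⟩ := h
  rcases List.sublist_singleton.mp h₂ with rfl | rfl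
  · left; simpa using h₁
  · right; exact ⟨l₁, rfl, h₁⟩

theorem exists_reduced_sublist_aux (n : ℕ) : ∀ σw : List B, σw.length ≤ n →
    ∃ ρ, ρ.Sublist σw ∧ cs.IsReduced ρ ∧ π ρ = π σw := by
  induction n using Nat.strong_induction_on with
  | _ n IHn =>
  intro σw hn
  by_cases hred : cs.IsReduced σw
  · exact ⟨σw, List.Sublist.refl _, hred, rfl⟩
  · -- find the first descent
    have hdesc : ∃ j, ∃ _ : j < σw.length, cs.IsReduced (σw.take j) ∧
        ℓ (π (σw.take j) * σ (σw.get ⟨j, by assumption⟩)) < ℓ (π (σw.take j)) := by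
      by_contra hcon
      push_neg at hcon
      have hstep : ∀ k, k ≤ σw.length → cs.IsReduced (σw.take k) := by
        intro k
        induction k with
        | zero => intro _; simp [CoxeterSystem.IsReduced]
        | succ k ihk =>
          intro hk1
          have hk : k < σw.length := by omega
          have hredk := ihk (le_of_lt hk)
          have hnl := hcon k hk hredk
          have htake : σw.take (k + 1) = σw.take k ++ [σw.get ⟨k, hk⟩] := by
            rw [List.take_succ, List.getElem?_eq_getElem hk]
            rfl
          have hπ : π (σw.take (k + 1)) = π (σw.take k) * σ (σw.get ⟨k, hk⟩) := by
            rw [htake, cs.wordProd_append, cs.wordProd_singleton]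
          rcases cs.length_mul_simple (π (σw.take k)) (σw.get ⟨k, hk⟩) with hup | hdown
          · show ℓ (π (σw.take (k+1))) = (σw.take (k+1)).length
            rw [hπ, hup, List.length_take]
            rw [CoxeterSystem.IsReduced, List.length_take] at hredk
            omega
          · exfalso
            rw [CoxeterSystem.IsReduced] at hredk
            have hlen0 : ℓ (π (σw.take k)) = k := by
              rw [hredk, List.length_take]; omega
            omega
      exact hred (by simpa using hstep σw.length (le_refl _))
    obtain ⟨j, hj, hredj, hltj⟩ := hdesc
    obtain ⟨k, hk, hπk⟩ := strong_exchange cs (σw.take j)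
      (cs.isReflection_simple (σw.get ⟨j, hj⟩)) hltj
    have htake : σw.take (j + 1) = σw.take j ++ [σw.get ⟨j, hj⟩] := by
      rw [List.take_succ, List.getElem?_eq_getElem hj]
      rfl
    set ρ₀ := (σw.take j).eraseIdx k ++ σw.drop (j + 1) with hρ₀
    have hπρ₀ : π ρ₀ = π σw := by
      rw [hρ₀, cs.wordProd_append, hπk]
      have : π (σw.take j) * σ (σw.get ⟨j, hj⟩) = π (σw.take (j + 1)) := by
        rw [htake, cs.wordProd_append, cs.wordProd_singleton]
      rw [this, ← cs.wordProd_append, List.take_append_drop]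
    have hsub₀ : ρ₀.Sublist σw := by
      rw [hρ₀]
      have h1 : ((σw.take j).eraseIdx k).Sublist (σw.take (j + 1)) := by
        refine ((σw.take j).eraseIdx_sublist k).trans ?_
        have : σw.take j = (σw.take (j + 1)).take j := by
          rw [List.take_take]
          congr 1
          omega
        rw [this]
        exact List.take_sublist _ _
      have := h1.append (List.Sublist.refl (σw.drop (j + 1)))
      rwa [List.take_append_drop] at this
    have hlen₀ : ρ₀.length < σw.length := by
      rw [hρ₀, List.length_append]
      rw [List.length_take] at hk
      have := List.length_eraseIdx_add_one (l := σw.take j) (i := k) (by rw [List.length_take]; omega)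
      rw [List.length_take] at this
      have hd : (σw.drop (j + 1)).length = σw.length - (j + 1) := List.length_drop
      omega
    obtain ⟨ρ, hsub, hredρ, hπρ⟩ := IHn ρ₀.length (by omega) ρ₀ (le_refl _)
    exact ⟨ρ, hsub.trans hsub₀, hredρ, hπρ.trans hπρ₀⟩

/-- Deletion property: every word has a reduced sublist with the same product. -/
theorem exists_reduced_sublist (σw : List B) :
    ∃ ρ, ρ.Sublist σw ∧ cs.IsReduced ρ ∧ π ρ = π σw :=
  exists_reduced_sublist_aux cs σw.length σw (le_refl _)

/-- One chain step downward, subword version. -/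
theorem step_subword {x t : W} (ht : cs.IsReflection t) (hlt : ℓ (x * t) < ℓ x)
    (ρ : List B) (hπ : π ρ = x) :
    ∃ ρ', ρ'.Sublist ρ ∧ cs.IsReduced ρ' ∧ π ρ' = x * t := by
  subst hπ
  obtain ⟨j, hj, hπj⟩ := strong_exchange cs ρ ht hlt
  obtain ⟨ρ', hsub, hred, hπ'⟩ := exists_reduced_sublist cs (ρ.eraseIdx j)
  exact ⟨ρ', hsub.trans (ρ.eraseIdx_sublist j), hred, hπ'.trans hπj⟩

/-- The Bruhat covering-ish relation: right multiplication by a reflection,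
increasing length. -/
def clt (x y : W) : Prop := (∃ t, cs.IsReflection t ∧ y = x * t) ∧ ℓ x < ℓ y

/-- Chain version of the Bruhat order. -/
def CLe : W → W → Prop := Relation.ReflTransGen (clt cs)

theorem cle_refl (x : W) : CLe cs x x := Relation.ReflTransGen.refl

theorem cle_trans {x y z : W} (h1 : CLe cs x y) (h2 : CLe cs y z) : CLe cs x z :=
  Relation.ReflTransGen.trans h1 h2

theorem cle_up_refl {w t : W} (ht : cs.IsReflection t) (h : ℓ w < ℓ (w * t)) :
    CLe cs w (w * t) :=
  Relation.ReflTransGen.single ⟨⟨t, ht, rfl⟩, h⟩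

theorem cle_up {w : W} {i : B} (h : ℓ w < ℓ (w * σ i)) : CLe cs w (w * σ i) :=
  cle_up_refl cs (cs.isReflection_simple i) h

theorem cle_down {w : W} {i : B} (h : ℓ (w * σ i) < ℓ w) : CLe cs (w * σ i) w :=
  Relation.ReflTransGen.single
    ⟨⟨σ i, cs.isReflection_simple i, (cs.simple_mul_simple_cancel_right i).symm⟩, h⟩

/-- Any element `≤` in the chain order has a reduced subword inside any reduced word. -/
theorem subword_of_cle {v w : W} (h : CLe cs v w) (ω : List B) (hred : cs.IsReduced ω)
    (hπ : π ω = w) : ∃ τ, τ.Sublist ω ∧ cs.IsReduced τ ∧ π τ = v := by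
  induction h using Relation.ReflTransGen.head_induction_on with
  | refl => exact ⟨ω, List.Sublist.refl _, hred, hπ⟩
  | head hac _ ih =>
    rename_i a c _
    obtain ⟨τ, hsub, hredτ, hπτ⟩ := ih
    obtain ⟨⟨t, ht, rfl⟩, hlen⟩ := hac
    have hlt : ℓ ((a * t) * t) < ℓ (a * t) := by
      rw [mul_assoc, ht.mul_self, mul_one]
      exact hlen
    obtain ⟨ρ', hsub', hred', hπ'⟩ := step_subword cs ht hlt τ hπτ
    rw [mul_assoc, ht.mul_self, mul_one] at hπ'
    exact ⟨ρ', hsub'.trans hsub, hred', hπ'⟩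

/-- The joint lifting/subword induction. -/
theorem ABC (n : ℕ) :
    (∀ w u : W, ∀ i : B, ℓ w ≤ n → CLe cs u w → ℓ w < ℓ (w * σ i) →
      CLe cs (u * σ i) (w * σ i)) ∧
    (∀ w u : W, ∀ i : B, ℓ w ≤ n → CLe cs u w → ℓ (w * σ i) < ℓ w →
      CLe cs (u * σ i) w) ∧
    (∀ ω : List B, cs.IsReduced ω → ω.length ≤ n → ∀ τ : List B, τ.Sublist ω →
      CLe cs (π τ) (π ω)) := by
  induction n using Nat.strong_induction_on with
  | _ n IHn =>
  have hA : ∀ w u : W, ∀ i : B, ℓ w ≤ n → CLe cs u w → ℓ w < ℓ (w * σ i) →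
      CLe cs (u * σ i) (w * σ i) := by
    intro w u i hwn hle hasc
    rcases Relation.ReflTransGen.cases_tail hle with rfl | ⟨w₁, hu1, hstep⟩
    · exact cle_refl cs _
    · obtain ⟨⟨t, ht, rfl⟩, hlen⟩ := hstep
      have hn1 : n - 1 < n := by omega
      have hw1n : ℓ w₁ ≤ n - 1 := by omega
      rcases lt_or_gt_of_ne (cs.length_mul_simple_ne u i) with hud | hua
      · -- u descends: u σ ≤ u ≤ w₁ ≤ w ≤ w σ
        refine (cle_down cs hud).trans (hu1.trans (Relation.ReflTransGen.trans ?_ (cle_up cs hasc)))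
        exact Relation.ReflTransGen.single ⟨⟨t, ht, rfl⟩, hlen⟩
      · rcases lt_or_gt_of_ne (cs.length_mul_simple_ne w₁ i) with hw1d | hw1a
        · -- w₁ descends: B(n-1)
          have hB := (IHn (n - 1) hn1).2.1 w₁ u i hw1n hu1 hw1d
          refine hB.trans (Relation.ReflTransGen.trans ?_ (cle_up cs hasc))
          exact Relation.ReflTransGen.single ⟨⟨t, ht, rfl⟩, hlen⟩
        · -- w₁ ascends: A(n-1) then conjugated reflection step
          have hA1 := (IHn (n - 1) hn1).1 w₁ u i hw1n hu1 hw1a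
          have hr : cs.IsReflection (σ i * t * σ i) := by
            have := ht.conj (σ i)
            rwa [cs.inv_simple] at this
          have heq : (w₁ * σ i) * (σ i * t * σ i) = (w₁ * t) * σ i := by
            have h1 : (w₁ * σ i) * (σ i * t * σ i) = w₁ * (σ i * σ i) * (t * σ i) := by
              group
            rw [h1, cs.simple_mul_simple_self, mul_one, ← mul_assoc]
          have hlt2 : ℓ (w₁ * σ i) < ℓ ((w₁ * σ i) * (σ i * t * σ i)) := by
            rw [heq]
            have hle1 : ℓ (w₁ * σ i) ≤ ℓ w₁ + 1 := by
              have := cs.length_mul_le w₁ (σ i)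
              rwa [cs.length_simple] at this
            omega
          have hstep2 := cle_up_refl cs hr hlt2
          rw [heq] at hstep2
          exact hA1.trans hstep2
  have hB : ∀ w u : W, ∀ i : B, ℓ w ≤ n → CLe cs u w → ℓ (w * σ i) < ℓ w →
      CLe cs (u * σ i) w := by
    intro w u i hwn hle hdesc
    rcases Relation.ReflTransGen.cases_tail hle with rfl | ⟨w₁, hu1, hstep⟩
    · exact cle_down cs hdesc
    · obtain ⟨⟨t, ht, rfl⟩, hlen⟩ := hstep
      have hn1 : n - 1 < n := by omega
      have hw1n : ℓ w₁ ≤ n - 1 := by omega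
      have hw1w : CLe cs w₁ (w₁ * t) := Relation.ReflTransGen.single ⟨⟨t, ht, rfl⟩, hlen⟩
      rcases lt_or_gt_of_ne (cs.length_mul_simple_ne u i) with hud | hua
      · exact (cle_down cs hud).trans (hu1.trans hw1w)
      · rcases lt_or_gt_of_ne (cs.length_mul_simple_ne w₁ i) with hw1d | hw1a
        · exact ((IHn (n - 1) hn1).2.1 w₁ u i hw1n hu1 hw1d).trans hw1w
        · have hA1 := (IHn (n - 1) hn1).1 w₁ u i hw1n hu1 hw1a
          -- now show w₁ * σ i ≤ w₁ * t  (= w)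
          set w := w₁ * t with hwdef
          have hlw : ℓ (w * σ i) = ℓ w - 1 ∧ 1 ≤ ℓ w := by
            rcases cs.length_mul_simple w i with h1 | h1 <;> omega
          obtain ⟨σr, hredσr, hπσr⟩ := cs.exists_reduced_word' (w * σ i)
          have hωred : cs.IsReduced (σr ++ [i]) ∧ π (σr ++ [i]) = w := by
            have hπω : π (σr ++ [i]) = w := by
              rw [cs.wordProd_append, cs.wordProd_singleton, ← hπσr,
                cs.simple_mul_simple_cancel_right]
            constructor
            · show ℓ (π (σr ++ [i])) = (σr ++ [i]).length
              rw [hπω, List.length_append, List.length_singleton]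
              rw [CoxeterSystem.IsReduced] at hredσr
              rw [← hπσr] at hredσr
              omega
            · exact hπω
          have hwt : w * t = w₁ := by
            rw [hwdef, mul_assoc, ht.mul_self, mul_one]
          have hltwt : ℓ (π (σr ++ [i]) * t) < ℓ (π (σr ++ [i])) := by
            rw [hωred.2, hwt]
            exact hlen
          obtain ⟨j, hj, hπj⟩ := strong_exchange cs (σr ++ [i]) ht hltwt
          rw [hωred.2, hwt] at hπj
          rw [List.length_append, List.length_singleton] at hj
          rcases Nat.lt_or_ge j σr.length with hjlt | hjge
          · -- erased inside σr
            rw [List.eraseIdx_append_of_lt_length hjlt] at hπj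
            have hw1s : w₁ * σ i = π (σr.eraseIdx j) := by
              rw [← hπj, cs.wordProd_append, cs.wordProd_singleton,
                cs.simple_mul_simple_cancel_right]
            have hC1 := (IHn (n - 1) hn1).2.2 σr hredσr
              (by
                rw [CoxeterSystem.IsReduced] at hredσr
                rw [← hπσr] at hredσr
                omega)
              (σr.eraseIdx j) (σr.eraseIdx_sublist j)
            rw [← hw1s, ← hπσr] at hC1
            exact hA1.trans (hC1.trans (cle_down cs hdesc))
          · -- erased the final letter
            have hjeq : j = σr.length := by omega
            rw [hjeq, List.eraseIdx_append_of_length_le (le_refl _)] at hπj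
            simp only [Nat.sub_self, List.eraseIdx_cons_zero, List.append_nil] at hπj
            have hw1s : w₁ * σ i = w := by
              rw [← hπj, ← hπσr, cs.simple_mul_simple_cancel_right]
            exact hw1s ▸ hA1
  have hC : ∀ ω : List B, cs.IsReduced ω → ω.length ≤ n → ∀ τ : List B, τ.Sublist ω →
      CLe cs (π τ) (π ω) := by
    intro ω hred hlen τ hsub
    rcases List.eq_nil_or_concat ω with rfl | ⟨σw, a, rfl⟩
    · rw [List.sublist_nil.mp hsub]
      exact cle_refl cs _
    · rw [List.concat_eq_append] at hsub hred hlen ⊢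
      have hn1 : n - 1 < n := by
        have := List.length_append (as := σw) (bs := [a])
        simp at hlen ⊢
        omega
      have hredσ : cs.IsReduced σw := by
        have := CoxeterSystem.IsReduced.take hred σw.length
        rwa [List.take_left] at this
      have hπω : π (σw ++ [a]) = π σw * σ a := by
        rw [cs.wordProd_append, cs.wordProd_singleton]
      have hasc : ℓ (π σw) < ℓ (π σw * σ a) := by
        have h1 : ℓ (π σw) = σw.length := hredσ
        have h2 : ℓ (π (σw ++ [a])) = σw.length + 1 := by
          have := hred
          rw [CoxeterSystem.IsReduced, List.length_append, List.length_singleton] at this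
          exact this
        rw [← hπω, h1, h2]
        omega
      have hlenσ : σw.length ≤ n - 1 := by
        rw [List.length_append, List.length_singleton] at hlen
        omega
      rcases sublist_concat_cases hsub with hτσ | ⟨τ', rfl, hτ'σ⟩
      · have hC1 := (IHn (n - 1) hn1).2.2 σw hredσ hlenσ τ hτσ
        refine hC1.trans ?_
        rw [hπω]
        exact cle_up cs hasc
      · have hC1 := (IHn (n - 1) hn1).2.2 σw hredσ hlenσ τ' hτ'σ
        have hA1 := (IHn (n - 1) hn1).1 (π σw) (π τ') a
          (by rw [(hredσ : ℓ (π σw) = σw.length)]; exact hlenσ) hC1 hasc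
        rw [hπω, cs.wordProd_append, cs.wordProd_singleton]
        exact hA1
  exact ⟨hA, hB, hC⟩

/-- Subword implies chain order. -/
theorem cle_of_sublist {ω τ : List B} (hred : cs.IsReduced ω) (hsub : τ.Sublist ω) :
    CLe cs (π τ) (π ω) :=
  (ABC cs ω.length).2.2 ω hred (le_refl _) τ hsub


end CoxAux

/-- The Bruhat order on a Coxeter group, via the subword property. -/
def BruhatLE {B W : Type*} [Group W] {M : CoxeterMatrix B}
    (cs : CoxeterSystem M W) (v w : W) : Prop :=
  ∃ ω : List B, cs.IsReduced ω ∧ cs.wordProd ω = w ∧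
    ∃ ω' : List B, ω'.Sublist ω ∧ cs.IsReduced ω' ∧ cs.wordProd ω' = v

/-- The unique positive distinguished subexpression for `v ≤ w` inside a reduced word
`ω = s_{i_1} ⋯ s_{i_n}` for `w` can be constructed greedily from the right: starting with
`v_{(n)} = v`, set `t_j = s_{i_j}` if `v_{(j)} s_{i_j} < v_{(j)}` (in Bruhat order, i.e.
the length decreases) and `t_j = 1` otherwise, and put `v_{(j-1)} = v_{(j)} t_j⁻¹`.
Then the `v_{(j)}` are exactly the partial products of the subexpression `t`, the
product of the `t_j` is `v`, and `t` is positive distinguished: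
`v_{(j-1)} < v_{(j-1)} s_{i_j}` for all `j`. -/
theorem greedy_positive_distinguished_subexpression
    {B W : Type*} [Group W] {M : CoxeterMatrix B} (cs : CoxeterSystem M W)
    (v w : W) (ω : List B) (hred : cs.IsReduced ω) (hw : cs.wordProd ω = w)
    (hle : BruhatLE cs v w)
    (u : ℕ → W) (t : Fin ω.length → W)
    (hun : u ω.length = v)
    (hgreedy : ∀ j : Fin ω.length,
      (cs.length (u ((j : ℕ) + 1) * cs.simple (ω.get j)) < cs.length (u ((j : ℕ) + 1)) →
        t j = cs.simple (ω.get j) ∧ u (j : ℕ) = u ((j : ℕ) + 1) * (cs.simple (ω.get j))⁻¹) ∧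
      (¬ cs.length (u ((j : ℕ) + 1) * cs.simple (ω.get j)) < cs.length (u ((j : ℕ) + 1)) →
        t j = 1 ∧ u (j : ℕ) = u ((j : ℕ) + 1))) :
    (∀ k : ℕ, k ≤ ω.length → u k = ((List.ofFn t).take k).prod) ∧
    (List.ofFn t).prod = v ∧
    ∀ j : Fin ω.length,
      cs.length (u (j : ℕ)) < cs.length (u (j : ℕ) * cs.simple (ω.get j)) := by
  classical
  -- v has a reduced subword inside the given reduced word ω
  obtain ⟨ω₀, hred₀, hπ₀, τ₀, hsub₀, hredτ₀, hπτ₀⟩ := hle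
  have hcle : CoxAux.CLe cs v w := by
    rw [← hπ₀, ← hπτ₀]
    exact CoxAux.cle_of_sublist cs hred₀ hsub₀
  have hsubω := CoxAux.subword_of_cle cs hcle ω hred hw
  -- the greedy downward step
  have hQstep : ∀ k, ∀ hk : k < ω.length,
      (∃ τ, τ.Sublist (ω.take (k + 1)) ∧ cs.IsReduced τ ∧ cs.wordProd τ = u (k + 1)) →
      (∃ τ, τ.Sublist (ω.take k) ∧ cs.IsReduced τ ∧ cs.wordProd τ = u k) := by
    intro k hk ⟨τ, hsub, hredτ, hπτ⟩
    have htake : ω.take (k + 1) = ω.take k ++ [ω.get ⟨k, hk⟩] := by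
      rw [List.take_succ, List.getElem?_eq_getElem hk]
      rfl
    rw [htake] at hsub
    obtain ⟨h1, h2⟩ := hgreedy ⟨k, hk⟩
    by_cases hlt : cs.length (u (k + 1) * cs.simple (ω.get ⟨k, hk⟩)) < cs.length (u (k + 1))
    · obtain ⟨htj, hu⟩ := h1 hlt
      rw [cs.inv_simple] at hu
      rcases CoxAux.sublist_concat_cases hsub with hτσ | ⟨τ', rfl, hτ'σ⟩
      · -- exchange within τ
        have hltτ : cs.length (cs.wordProd τ * cs.simple (ω.get ⟨k, hk⟩)) <
            cs.length (cs.wordProd τ) := by rw [hπτ]; exact hlt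
        obtain ⟨j, hj, hπj⟩ := CoxAux.strong_exchange cs τ
          (cs.isReflection_simple (ω.get ⟨k, hk⟩)) hltτ
        rw [hπτ] at hπj
        refine ⟨τ.eraseIdx j, (τ.eraseIdx_sublist j).trans hτσ, ?_, by rw [hπj, ← hu]⟩
        · show cs.length (cs.wordProd (τ.eraseIdx j)) = (τ.eraseIdx j).length
          rw [hπj]
          have hred1 : cs.length (cs.wordProd τ) = τ.length := hredτ
          rw [hπτ] at hred1
          have hlen1 := List.length_eraseIdx_add_one hj
          rcases cs.length_mul_simple (u (k + 1)) (ω.get ⟨k, hk⟩) with hh | hh <;> omega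
      · -- τ ends with the letter
        have hπτ' : cs.wordProd τ' = u k := by
          have : cs.wordProd (τ' ++ [ω.get ⟨k, hk⟩]) = cs.wordProd τ' * cs.simple (ω.get ⟨k, hk⟩) := by
            rw [cs.wordProd_append, cs.wordProd_singleton]
          rw [this] at hπτ
          rw [hu, ← hπτ, cs.simple_mul_simple_cancel_right]
        refine ⟨τ', hτ'σ, ?_, hπτ'⟩
        have := CoxeterSystem.IsReduced.take hredτ τ'.length
        rwa [List.take_left] at this
    · obtain ⟨htj, hu⟩ := h2 hlt
      rcases CoxAux.sublist_concat_cases hsub with hτσ | ⟨τ', rfl, hτ'σ⟩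
      · exact ⟨τ, hτσ, hredτ, by rw [hπτ, hu]⟩
      · exfalso
        apply hlt
        have hsplit : cs.wordProd (τ' ++ [ω.get ⟨k, hk⟩]) =
            cs.wordProd τ' * cs.simple (ω.get ⟨k, hk⟩) := by
          rw [cs.wordProd_append, cs.wordProd_singleton]
        have hback : u (k + 1) * cs.simple (ω.get ⟨k, hk⟩) = cs.wordProd τ' := by
          rw [← hπτ, hsplit, cs.simple_mul_simple_cancel_right]
        have hredlen : cs.length (cs.wordProd (τ' ++ [ω.get ⟨k, hk⟩])) =
            τ'.length + 1 := by
          have : cs.length (cs.wordProd (τ' ++ [ω.get ⟨k, hk⟩])) =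
              (τ' ++ [ω.get ⟨k, hk⟩]).length := hredτ
          rw [List.length_append, List.length_singleton] at this
          exact this
        have hb := cs.length_wordProd_le τ'
        rw [hback, ← hπτ, hredlen]
        omega
  -- downward induction to k = 0
  have hQ : ∀ m, m ≤ ω.length → ∃ τ, τ.Sublist (ω.take (ω.length - m)) ∧
      cs.IsReduced τ ∧ cs.wordProd τ = u (ω.length - m) := by
    intro m
    induction m with
    | zero =>
      intro _
      rw [Nat.sub_zero, List.take_length]
      rw [hun]
      exact hsubω
    | succ m ihm =>
      intro hm1
      have hk : ω.length - (m + 1) < ω.length := by omega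
      have he : ω.length - m = (ω.length - (m + 1)) + 1 := by omega
      have hprev := ihm (by omega)
      rw [he] at hprev
      exact hQstep _ hk hprev
  have hu0 : u 0 = 1 := by
    obtain ⟨τ, hsub, _, hπτ⟩ := hQ ω.length (le_refl _)
    simp only [Nat.sub_self, List.take_zero] at hsub hπτ
    rw [List.sublist_nil.mp hsub] at hπτ
    rw [← hπτ, cs.wordProd_nil]
  have hstep : ∀ k, ∀ hk : k < ω.length, u (k + 1) = u k * t ⟨k, hk⟩ := by
    intro k hk
    obtain ⟨h1, h2⟩ := hgreedy ⟨k, hk⟩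
    by_cases hlt : cs.length (u (k + 1) * cs.simple (ω.get ⟨k, hk⟩)) < cs.length (u (k + 1))
    · obtain ⟨htj, hu⟩ := h1 hlt
      rw [htj, hu, inv_mul_cancel_right]
    · obtain ⟨htj, hu⟩ := h2 hlt
      rw [htj, hu, mul_one]
  have hofFn_len : (List.ofFn t).length = ω.length := List.length_ofFn
  have hpart1 : ∀ k : ℕ, k ≤ ω.length → u k = ((List.ofFn t).take k).prod := by
    intro k
    induction k with
    | zero => intro _; simpa using hu0
    | succ k ihk =>
      intro hk1
      have hk : k < ω.length := by omega
      have htk : ((List.ofFn t).take (k + 1)).prod = ((List.ofFn t).take k).prod * t ⟨k, hk⟩ := by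
        rw [List.take_succ, List.getElem?_eq_getElem (by rw [hofFn_len]; exact hk)]
        rw [List.prod_append]
        congr 1
        show ((List.ofFn t)[k] :: []).prod = t ⟨k, hk⟩
        rw [List.prod_cons, List.prod_nil, mul_one, List.getElem_ofFn]
      rw [htk, hstep k hk, ihk (by omega)]
  refine ⟨hpart1, ?_, ?_⟩
  · have h := hpart1 ω.length (le_refl _)
    rw [hun] at h
    rw [h, List.take_of_length_le (le_of_eq hofFn_len)]
  · intro j
    obtain ⟨h1, h2⟩ := hgreedy j
    by_cases hlt : cs.length (u ((j : ℕ) + 1) * cs.simple (ω.get j)) < cs.length (u ((j : ℕ) + 1))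
    · obtain ⟨htj, hu⟩ := h1 hlt
      rw [cs.inv_simple] at hu
      have hus : u (j : ℕ) * cs.simple (ω.get j) = u ((j : ℕ) + 1) := by
        rw [hu, cs.simple_mul_simple_cancel_right]
      rw [hus, hu]
      exact hlt
    · obtain ⟨htj, hu⟩ := h2 hlt
      rw [hu]
      have := cs.length_mul_simple_ne (u ((j : ℕ) + 1)) (ω.get j)
      omega
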